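/- arXiv:2208.09742 — 3 statements merged into one kernel-verified Lean document; each statement's English description precedes it below -/
import Mathlib

section
/- Let j : ℝ² → ℝ² (with coordinates (t,z)) be a continuously differentiable vector field with ∂_t j⁰ + ∂_z j^z = 0, satisfying j⁰ ≥ |j^z| everywhere, and suppose j⁰(t,·) is integrable on ℝ for each t with j decaying to zero as z → ±∞. Then for all t ≥ 0: ∫_{t}^{∞} j⁰(t,z) dz ≤ ∫_{0}^{∞} j⁰(0,z) dz. -/
open MeasureTheory Filter intervalIntegral Set

/-- Key finite-trapezoid inequality. -/
theorem pfi_key (j : ℝ × ℝ → ℝ × ℝ) (hj : ContDiff ℝ 1 j)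
    (hcons : ∀ p : ℝ × ℝ,
      fderiv ℝ (fun q => (j q).1) p (1, 0) + fderiv ℝ (fun q => (j q).2) p (0, 1) = 0)
    (hcausal : ∀ p : ℝ × ℝ, |(j p).2| ≤ (j p).1)
    (t R : ℝ) (ht : 0 ≤ t) (hR : 2 * t < R) :
    (∫ z in t..(R - t), (j (t, z)).1) ≤ ∫ z in (0:ℝ)..R, (j (0, z)).1 := by
  have hjc : Continuous j := hj.continuous
  have hDjc : Continuous (fderiv ℝ j) := hj.continuous_fderiv one_ne_zero
  have hd : ∀ q, HasFDerivAt j (fderiv ℝ j q) q := fun q => (hj.differentiable one_ne_zero q).hasFDerivAt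
  -- conservation in terms of fderiv of j
  have hcons' : ∀ p : ℝ × ℝ, (fderiv ℝ j p (1,0)).1 = -(fderiv ℝ j p (0,1)).2 := by
    intro p
    have h1 : HasFDerivAt (fun q => (j q).1) ((ContinuousLinearMap.fst ℝ ℝ ℝ).comp (fderiv ℝ j p)) p :=
      (ContinuousLinearMap.fst ℝ ℝ ℝ).hasFDerivAt.comp p (hd p)
    have h2 : HasFDerivAt (fun q => (j q).2) ((ContinuousLinearMap.snd ℝ ℝ ℝ).comp (fderiv ℝ j p)) p :=
      (ContinuousLinearMap.snd ℝ ℝ ℝ).hasFDerivAt.comp p (hd p)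
    have := hcons p
    rw [h1.fderiv, h2.fderiv] at this
    simp only [ContinuousLinearMap.coe_comp', Function.comp_apply,
      ContinuousLinearMap.coe_fst', ContinuousLinearMap.coe_snd'] at this
    linarith
  -- parametrization of the trapezoid's time slices
  set P : ℝ → ℝ → ℝ × ℝ := fun s u => (s, s + u * (R - 2 * s)) with hP
  have hPc : Continuous (fun su : ℝ × ℝ => P su.1 su.2) := by fun_prop
  have hPs : ∀ s u : ℝ, HasDerivAt (fun s' => P s' u) (1, 1 - 2 * u) s := by
    intro s u
    have h1 : HasDerivAt (fun s' : ℝ => s') 1 s := hasDerivAt_id s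
    have h2 : HasDerivAt (fun s' : ℝ => s' + u * (R - 2 * s')) (1 - 2 * u) s := by
      have : HasDerivAt (fun s' : ℝ => s' + u * (R - 2 * s')) (1 + u * (0 - 2 * 1)) s := by
        exact (hasDerivAt_id s).add (((hasDerivAt_const s R).sub
          ((hasDerivAt_id s).const_mul 2)).const_mul u)
      convert this using 1; ring
    exact h1.prodMk h2
  have hPu : ∀ s u : ℝ, HasDerivAt (fun u' => P s u') (0, R - 2 * s) u := by
    intro s u
    have h1 : HasDerivAt (fun _ : ℝ => s) 0 u := hasDerivAt_const u s
    have h2 : HasDerivAt (fun u' : ℝ => s + u' * (R - 2 * s)) (R - 2 * s) u := by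
      simpa using (hasDerivAt_const u s).fun_add ((hasDerivAt_id u).mul_const (R - 2 * s))
    exact h1.prodMk h2
  set φ : ℝ → ℝ → ℝ := fun s u => (j (P s u)).1 with hφdef
  set φ' : ℝ → ℝ → ℝ := fun s u => (fderiv ℝ j (P s u) (1, 1 - 2 * u)).1 with hφ'def
  have hφc : Continuous (fun su : ℝ × ℝ => φ su.1 su.2) := (hjc.comp hPc).fst
  have hφ'c : Continuous (fun su : ℝ × ℝ => φ' su.1 su.2) := by
    apply Continuous.fst
    exact (hDjc.comp hPc).clm_apply (by fun_prop)
  have hφd : ∀ s u : ℝ, HasDerivAt (fun s' => φ s' u) (φ' s u) s := by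
    intro s u
    exact ((ContinuousLinearMap.fst ℝ ℝ ℝ).hasFDerivAt.comp_hasDerivAt s
      ((hd (P s u)).comp_hasDerivAt s (hPs s u)))
  -- derivative of I s = ∫ u in 0..1, φ s u
  set I : ℝ → ℝ := fun s => ∫ u in (0:ℝ)..1, φ s u with hI
  have hId : ∀ s₀ : ℝ, HasDerivAt I (∫ u in (0:ℝ)..1, φ' s₀ u) s₀ := by
    intro s₀
    -- bound on compact set
    obtain ⟨C, hC⟩ : ∃ C, ∀ x ∈ (fun su : ℝ × ℝ => φ' su.1 su.2) ''
        (Icc (s₀ - 1) (s₀ + 1) ×ˢ Icc (0:ℝ) 1), ‖x‖ ≤ C := by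
      apply IsCompact.exists_bound_of_continuousOn
      · exact ((isCompact_Icc).prod isCompact_Icc).image hφ'c
      · exact continuousOn_id
    have key := intervalIntegral.hasDerivAt_integral_of_dominated_loc_of_deriv_le
      (F := φ) (F' := φ') (x₀ := s₀) (a := (0:ℝ)) (b := 1) (μ := volume)
      (bound := fun _ => C) (s := Metric.ball s₀ 1) (Metric.ball_mem_nhds s₀ one_pos)
      (Eventually.of_forall fun x =>
        ((hφc.comp (Continuous.prodMk_right x)).aestronglyMeasurable))
      ((hφc.comp (Continuous.prodMk_right s₀)).intervalIntegrable 0 1)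
      ((hφ'c.comp (Continuous.prodMk_right s₀)).aestronglyMeasurable)
      ?_ (intervalIntegrable_const)
      (Eventually.of_forall fun u _ x _ => hφd x u)
    · exact key.2
    · refine Eventually.of_forall fun u hu x hx => ?_
      rw [Set.uIoc_of_le (by norm_num : (0:ℝ) ≤ 1)] at hu
      refine hC _ ⟨(x, u), ?_, rfl⟩
      constructor
      · constructor <;> [linarith [abs_lt.mp (by simpa [Real.dist_eq] using hx)];
          linarith [abs_lt.mp (by simpa [Real.dist_eq] using hx)]]
      · exact ⟨le_of_lt hu.1, hu.2⟩
  -- the boundary function ψ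
  have hψcalc : ∀ s₀ : ℝ, (∫ u in (0:ℝ)..1, (R - 2 * s₀) * φ' s₀ u)
      = (-(j (P s₀ 1)).2 + (1 - 2 * 1) * (j (P s₀ 1)).1)
        - (-(j (P s₀ 0)).2 + (1 - 2 * 0) * (j (P s₀ 0)).1) + 2 * I s₀ := by
    intro s₀
    set ψ : ℝ → ℝ := fun u => -(j (P s₀ u)).2 + (1 - 2 * u) * (j (P s₀ u)).1 with hψdef
    set ψ' : ℝ → ℝ := fun u => (R - 2 * s₀) * φ' s₀ u - 2 * φ s₀ u with hψ'def
    have hju : ∀ u : ℝ, HasDerivAt (fun u' => j (P s₀ u'))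
        (fderiv ℝ j (P s₀ u) (0, R - 2 * s₀)) u := fun u =>
      (hd (P s₀ u)).comp_hasDerivAt u (hPu s₀ u)
    have hψd : ∀ u : ℝ, HasDerivAt ψ (ψ' u) u := by
      intro u
      have h2 : HasDerivAt (fun u' => (j (P s₀ u')).2)
          ((fderiv ℝ j (P s₀ u) (0, R - 2 * s₀)).2) u :=
        (ContinuousLinearMap.snd ℝ ℝ ℝ).hasFDerivAt.comp_hasDerivAt u (hju u)
      have h1 : HasDerivAt (fun u' => (j (P s₀ u')).1)
          ((fderiv ℝ j (P s₀ u) (0, R - 2 * s₀)).1) u :=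
        (ContinuousLinearMap.fst ℝ ℝ ℝ).hasFDerivAt.comp_hasDerivAt u (hju u)
      have h3 : HasDerivAt (fun u' : ℝ => 1 - 2 * u') (-2) u := by
        simpa using (hasDerivAt_const u (1:ℝ)).fun_sub ((hasDerivAt_id u).const_mul 2)
      have := (h2.fun_neg).fun_add (h3.fun_mul h1)
      refine this.congr_deriv ?_
      -- ψ' u = -(D(0,R-2s)).2 + (-2 * j.1 + (1-2u) * (D(0,R-2s)).1)
      have hlin : fderiv ℝ j (P s₀ u) (1, 1 - 2*u)
          = fderiv ℝ j (P s₀ u) (1, 0) + (1 - 2*u) • fderiv ℝ j (P s₀ u) (0, 1) := by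
        rw [← ContinuousLinearMap.map_smul, ← ContinuousLinearMap.map_add]
        norm_num [Prod.smul_mk, Prod.mk_add_mk]
      have hlin2 : fderiv ℝ j (P s₀ u) (0, R - 2*s₀)
          = (R - 2*s₀) • fderiv ℝ j (P s₀ u) (0, 1) := by
        rw [← ContinuousLinearMap.map_smul]
        norm_num [Prod.smul_mk]
      simp only [hψ'def, hφ'def, hφdef, hlin, hlin2, Prod.fst_add, Prod.snd_add,
        Prod.smul_fst, Prod.smul_snd, smul_eq_mul, hcons' (P s₀ u)]
      ring
    have hψ'int : IntervalIntegrable ψ' volume 0 1 := by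
      apply Continuous.intervalIntegrable
      have c1 : Continuous (fun u => φ' s₀ u) := hφ'c.comp (Continuous.prodMk_right s₀)
      have c2 : Continuous (fun u => φ s₀ u) := hφc.comp (Continuous.prodMk_right s₀)
      fun_prop
    have hFTC : (∫ u in (0:ℝ)..1, ψ' u) = ψ 1 - ψ 0 :=
      intervalIntegral.integral_eq_sub_of_hasDerivAt (fun u _ => hψd u) hψ'int
    have hsplit : (∫ u in (0:ℝ)..1, ψ' u)
        = (∫ u in (0:ℝ)..1, (R - 2 * s₀) * φ' s₀ u) - 2 * I s₀ := by
      have c1 : IntervalIntegrable (fun u => (R - 2*s₀) * φ' s₀ u) volume 0 1 :=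
        (Continuous.intervalIntegrable (by
          have := hφ'c.comp (Continuous.prodMk_right s₀); fun_prop) 0 1)
      have c2 : IntervalIntegrable (fun u => 2 * φ s₀ u) volume 0 1 :=
        (Continuous.intervalIntegrable (by
          have := hφc.comp (Continuous.prodMk_right s₀); fun_prop) 0 1)
      rw [hψ'def]
      rw [intervalIntegral.integral_sub c1 c2, intervalIntegral.integral_const_mul]
      simp [hI, intervalIntegral.integral_const_mul]
    rw [hsplit] at hFTC
    simp only [hψdef] at hFTC
    linarith [hFTC]
  -- H s = mass between the two null lines at time s
  set H : ℝ → ℝ := fun s => (R - 2 * s) * I s with hHdef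
  have hHd : ∀ s₀ : ℝ, HasDerivAt H
      ((-(j (P s₀ 1)).2 + (1 - 2 * 1) * (j (P s₀ 1)).1)
        - (-(j (P s₀ 0)).2 + (1 - 2 * 0) * (j (P s₀ 0)).1)) s₀ := by
    intro s₀
    have hg : HasDerivAt (fun s : ℝ => R - 2 * s) (-2) s₀ := by
      simpa using (hasDerivAt_const s₀ R).fun_sub ((hasDerivAt_id s₀).const_mul 2)
    have hprod := hg.fun_mul (hId s₀)
    have h2 : (R - 2 * s₀) * (∫ u in (0:ℝ)..1, φ' s₀ u)
        = (-(j (P s₀ 1)).2 + (1 - 2 * 1) * (j (P s₀ 1)).1)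
          - (-(j (P s₀ 0)).2 + (1 - 2 * 0) * (j (P s₀ 0)).1) + 2 * I s₀ := by
      rw [← intervalIntegral.integral_const_mul]
      exact hψcalc s₀
    refine hprod.congr_deriv ?_
    linarith [h2]
  -- the derivative of H is nonpositive (causality)
  have hHmono : Antitone H := by
    apply antitone_of_deriv_nonpos
    · exact fun s => (hHd s).differentiableAt
    · intro s
      rw [(hHd s).deriv]
      have c1 := abs_le.mp (hcausal (P s 1))
      have c0 := abs_le.mp (hcausal (P s 0))
      nlinarith [c1.1, c1.2, c0.1, c0.2]
  -- identify H with the interval integral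
  have hsub : ∀ s : ℝ, R - 2 * s ≠ 0 → H s = ∫ z in s..(R - s), (j (s, z)).1 := by
    intro s hs
    have hsubst := intervalIntegral.integral_comp_mul_add (a := (0:ℝ)) (b := 1)
      (fun z => (j (s, z)).1) hs s
    have harg : ∀ u : ℝ, (R - 2 * s) * u + s = s + u * (R - 2 * s) := fun u => by ring
    have e0 : s + 0 * (R - 2 * s) = s := by ring
    have e1 : s + 1 * (R - 2 * s) = R - s := by ring
    simp only [harg, smul_eq_mul] at hsubst
    rw [e0, e1] at hsubst
    have hIs : I s = (R - 2 * s)⁻¹ * ∫ z in s..(R - s), (j (s, z)).1 := hsubst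
    rw [hHdef]
    simp only [hIs]
    field_simp
  have hR0 : (R : ℝ) - 2 * 0 ≠ 0 := by linarith
  have hRt : (R : ℝ) - 2 * t ≠ 0 := by linarith
  have key : H t ≤ H 0 := hHmono ht
  rw [hsub t hRt, hsub 0 hR0] at key
  simpa using key


/-- Probability-flow inequality: for a conserved, causal (|j^z| ≤ j⁰) current
decaying at spatial infinity, the probability to the right of the light ray
z = t at time t never exceeds the initial probability to the right of z = 0.
Coordinates: p = (t, z); (j p).1 = j⁰, (j p).2 = j^z. -/
theorem probability_flow_inequality
    (j : ℝ × ℝ → ℝ × ℝ) (hj : ContDiff ℝ 1 j)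
    (hcons : ∀ p : ℝ × ℝ,
      fderiv ℝ (fun q => (j q).1) p (1, 0) + fderiv ℝ (fun q => (j q).2) p (0, 1) = 0)
    (hcausal : ∀ p : ℝ × ℝ, |(j p).2| ≤ (j p).1)
    (hint : ∀ t : ℝ, Integrable (fun z => (j (t, z)).1))
    (hdecay : ∀ t : ℝ, Tendsto (fun z => j (t, z)) atTop (nhds 0) ∧
      Tendsto (fun z => j (t, z)) atBot (nhds 0)) :
    ∀ t : ℝ, 0 ≤ t →
      (∫ z in Set.Ioi t, (j (t, z)).1) ≤ ∫ z in Set.Ioi (0 : ℝ), (j (0, z)).1 := by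
  intro t ht
  have hpos : ∀ p : ℝ × ℝ, 0 ≤ (j p).1 := fun p => (abs_nonneg _).trans (hcausal p)
  have htend : Tendsto (fun R : ℝ => ∫ z in t..(R - t), (j (t, z)).1) atTop
      (nhds (∫ z in Set.Ioi t, (j (t, z)).1)) :=
    intervalIntegral_tendsto_integral_Ioi t (hint t).integrableOn
      (tendsto_atTop_add_const_right _ _ tendsto_id)
  refine le_of_tendsto htend ?_
  filter_upwards [eventually_gt_atTop (2 * t)] with R hRgt
  have h0R : (0:ℝ) ≤ R := by linarith
  calc (∫ z in t..(R - t), (j (t, z)).1) ≤ ∫ z in (0:ℝ)..R, (j (0, z)).1 :=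
        pfi_key j hj hcons hcausal t R ht hRgt
    _ ≤ ∫ z in Set.Ioi (0:ℝ), (j (0, z)).1 := by
        rw [intervalIntegral.integral_of_le h0R]
        exact setIntegral_mono_set (hint 0).integrableOn
          (Eventually.of_forall fun z => hpos _)
          (HasSubset.Subset.eventuallyLE Ioc_subset_Ioi_self)
end

section
/- Under the hypotheses of the probability-flow inequality (conserved current j with j⁰ ≥ |j^z|, total probability ∫_ℝ j⁰(t,z) dz = 1 for all t, suitable decay at infinity), if ∫_{−∞}^{0} j⁰(0,z)dz = P (the electron is initially to the left of z = 0 with probability P), then for every 0 ≤ t < L: ∫_{L}^{∞} j⁰(t,z) dz ≤ 1 − P. -/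
open MeasureTheory Filter Set
open scoped ENNReal

private lemma hasDerivAt_comp_diag (f : ℝ × ℝ → ℝ) (hf : ContDiff ℝ 1 f) (w x : ℝ) :
    HasDerivAt (fun x : ℝ => f (x, w + x)) (fderiv ℝ f (x, w + x) (1, 1)) x := by
  have h1 : HasDerivAt (fun x : ℝ => (x, w + x)) ((1 : ℝ), (1 : ℝ)) x :=
    (hasDerivAt_id x).prodMk ((hasDerivAt_id x).const_add w)
  exact ((hf.differentiable one_ne_zero) (x, w + x)).hasFDerivAt.comp_hasDerivAt x h1

private lemma hasDerivAt_comp_vert (f : ℝ × ℝ → ℝ) (hf : ContDiff ℝ 1 f) (t w : ℝ) :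
    HasDerivAt (fun w : ℝ => f (t, w + t)) (fderiv ℝ f (t, w + t) (0, 1)) w := by
  have h1 : HasDerivAt (fun w : ℝ => (t, w + t)) ((0 : ℝ), (1 : ℝ)) w :=
    (hasDerivAt_const w t).prodMk ((hasDerivAt_id w).add_const t)
  exact ((hf.differentiable one_ne_zero) (t, w + t)).hasFDerivAt.comp_hasDerivAt w h1

/-- Luminal bound on the speed of tunnelling: if the electron is initially to the
left of z = 0 with probability P, then for every time 0 ≤ t < L the probability to
the right of the barrier edge z = L cannot exceed the initially leaked probability
1 − P. Coordinates: p = (t, z); (j p).1 = j⁰, (j p).2 = j^z. -/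
theorem luminal_bound_on_tunnelling
    (j : ℝ × ℝ → ℝ × ℝ) (hj : ContDiff ℝ 1 j)
    (hcons : ∀ p : ℝ × ℝ,
      fderiv ℝ (fun q => (j q).1) p (1, 0) + fderiv ℝ (fun q => (j q).2) p (0, 1) = 0)
    (hcausal : ∀ p : ℝ × ℝ, |(j p).2| ≤ (j p).1)
    (hint : ∀ t : ℝ, Integrable (fun z => (j (t, z)).1))
    (hdecay : ∀ t : ℝ, Tendsto (fun z => j (t, z)) atTop (nhds 0) ∧
      Tendsto (fun z => j (t, z)) atBot (nhds 0))
    (hnorm : ∀ t : ℝ, (∫ z : ℝ, (j (t, z)).1) = 1)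
    (L P : ℝ) (hL : 0 < L)
    (hinit : (∫ z in Set.Iio (0 : ℝ), (j (0, z)).1) = P) :
    ∀ t : ℝ, 0 ≤ t → t < L →
      (∫ z in Set.Ioi L, (j (t, z)).1) ≤ 1 - P := by
  intro t ht htL
  have hfc : ContDiff ℝ 1 (fun q : ℝ × ℝ => (j q).1) := contDiff_fst.comp hj
  have hgc : ContDiff ℝ 1 (fun q : ℝ × ℝ => (j q).2) := contDiff_snd.comp hj
  have hfcont : Continuous (fun q : ℝ × ℝ => (j q).1) := hfc.continuous
  have hgcont : Continuous (fun q : ℝ × ℝ => (j q).2) := hgc.continuous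
  have hf0 : ∀ p : ℝ × ℝ, 0 ≤ (j p).1 := fun p => (abs_nonneg _).trans (hcausal p)
  -- the flux identity from conservation
  have hid : ∀ p, fderiv ℝ (fun q => (j q).1) p (1, 1) =
      fderiv ℝ (fun q => (j q).1) p (0, 1) - fderiv ℝ (fun q => (j q).2) p (0, 1) := by
    intro p
    have h1 : ((1 : ℝ), (1 : ℝ)) = ((1 : ℝ), (0 : ℝ)) + ((0 : ℝ), (1 : ℝ)) := by
      simp [Prod.ext_iff]
    rw [h1, map_add]
    have := hcons p
    linarith
  -- continuity of the directional derivatives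
  have hdf : Continuous (fun p : ℝ × ℝ => fderiv ℝ (fun q : ℝ × ℝ => (j q).1) p (1, 1)) :=
    (hfc.continuous_fderiv one_ne_zero).clm_apply continuous_const
  -- Φ R x := ∫ w in 0..R, (j (x, w+x)).1   ;   F x := ∫ z in Ioi x, (j (x,z)).1
  set F : ℝ → ℝ := fun x => ∫ z in Ioi x, (j (x, z)).1 with hF
  set Φ : ℝ → ℝ → ℝ := fun R x => ∫ w in (0 : ℝ)..R, (j (x, w + x)).1 with hΦ
  set ψ : ℝ → ℝ → ℝ := fun R x =>
    ((j (x, R + x)).1 - (j (x, R + x)).2) - ((j (x, x)).1 - (j (x, x)).2) with hψ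
  -- derivative of Φ R in x
  have hΦderiv : ∀ R x₀ : ℝ, HasDerivAt (Φ R) (ψ R x₀) x₀ := by
    intro R x₀
    -- step 1: differentiate under the integral
    obtain ⟨C, hC⟩ : ∃ C, ∀ y ∈ (Metric.closedBall x₀ 1) ×ˢ (uIcc (0 : ℝ) R),
        ‖fderiv ℝ (fun q : ℝ × ℝ => (j q).1) (y.1, y.2 + y.1) (1, 1)‖ ≤ C :=
      ((isCompact_closedBall _ _).prod isCompact_uIcc).exists_bound_of_continuousOn
        ((hdf.comp (continuous_fst.prodMk (continuous_snd.add continuous_fst))).continuousOn)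
    have step1 := (intervalIntegral.hasDerivAt_integral_of_dominated_loc_of_deriv_le
      (F := fun x w => (j (x, w + x)).1)
      (F' := fun x w => fderiv ℝ (fun q : ℝ × ℝ => (j q).1) (x, w + x) (1, 1))
      (x₀ := x₀) (a := (0:ℝ)) (b := R) (μ := volume) (bound := fun _ => C)
      (Metric.ball_mem_nhds x₀ one_pos)
      (Eventually.of_forall fun x =>
        ((hfcont.comp (continuous_const.prodMk (continuous_id.add continuous_const)
          : Continuous fun w : ℝ => (x, w + x)))).aestronglyMeasurable)
      ((hfcont.comp (continuous_const.prodMk (continuous_id.add continuous_const)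
          : Continuous fun w : ℝ => (x₀, w + x₀))).intervalIntegrable _ _)
      ((hdf.comp (continuous_const.prodMk (continuous_id.add continuous_const)
          : Continuous fun w : ℝ => (x₀, w + x₀))).aestronglyMeasurable)
      (Eventually.of_forall fun w hw x hx =>
        hC (x, w) ⟨Metric.ball_subset_closedBall hx,
          uIoc_subset_uIcc hw⟩)
      (intervalIntegrable_const)
      (Eventually.of_forall fun w _ x _ => hasDerivAt_comp_diag _ hfc w x)).2
    -- step 2: evaluate the integral of the derivative by FTC in w
    have step2 : (∫ w in (0 : ℝ)..R,
        fderiv ℝ (fun q : ℝ × ℝ => (j q).1) (x₀, w + x₀) (1, 1)) = ψ R x₀ := by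
      have hderw : ∀ w ∈ uIcc (0 : ℝ) R,
          HasDerivAt (fun w : ℝ => (j (x₀, w + x₀)).1 - (j (x₀, w + x₀)).2)
            (fderiv ℝ (fun q : ℝ × ℝ => (j q).1) (x₀, w + x₀) (1, 1)) w := by
        intro w _
        rw [hid]
        exact (hasDerivAt_comp_vert _ hfc x₀ w).sub (hasDerivAt_comp_vert _ hgc x₀ w)
      have := intervalIntegral.integral_eq_sub_of_hasDerivAt hderw
        ((hdf.comp (continuous_const.prodMk (continuous_id.add continuous_const)
          : Continuous fun w : ℝ => (x₀, w + x₀))).intervalIntegrable _ _)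
      rw [this]
      simp [hψ]
    rw [← step2]
    exact step1
  -- continuity of ψ R
  have hline1 : ∀ R : ℝ, Continuous (fun x : ℝ => ((x, R + x) : ℝ × ℝ)) := fun R =>
    continuous_id.prodMk (continuous_const.add continuous_id)
  have hline2 : Continuous (fun x : ℝ => ((x, x) : ℝ × ℝ)) :=
    continuous_id.prodMk continuous_id
  have hψcont : ∀ R, Continuous (ψ R) := fun R =>
    ((hfcont.comp (hline1 R)).sub (hgcont.comp (hline1 R))).sub
      ((hfcont.comp hline2).sub (hgcont.comp hline2))
  -- FTC for Φ in the time variable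
  have hE : ∀ R, (∫ x in (0 : ℝ)..t, ψ R x) = Φ R t - Φ R 0 := fun R =>
    intervalIntegral.integral_eq_sub_of_hasDerivAt (fun x _ => hΦderiv R x)
      ((hψcont R).intervalIntegrable _ _)
  have hψle : ∀ R x, ψ R x ≤ 2 * (j (x, R + x)).1 := by
    intro R x
    have h1 := abs_le.1 (hcausal (x, R + x))
    have h2 := abs_le.1 (hcausal (x, x))
    simp only [hψ]
    linarith [h1.1, h2.2]
  have hEle : ∀ R, Φ R t ≤ Φ R 0 + 2 * ∫ x in (0 : ℝ)..t, (j (x, R + x)).1 := by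
    intro R
    have h2 : (∫ x in (0 : ℝ)..t, ψ R x) ≤ ∫ x in (0 : ℝ)..t, 2 * (j (x, R + x)).1 :=
      intervalIntegral.integral_mono_on ht ((hψcont R).intervalIntegrable _ _)
        ((continuous_const.mul (hfcont.comp (hline1 R))).intervalIntegrable _ _)
        (fun x _ => hψle R x)
    have h3 := hE R
    rw [intervalIntegral.integral_const_mul] at h2
    linarith
  -- Φ in z-coordinates
  have hΦeq : ∀ R x, Φ R x = ∫ z in x..(R + x), (j (x, z)).1 := by
    intro R x
    have h := intervalIntegral.integral_comp_add_right (a := (0:ℝ)) (b := R)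
      (fun z => (j (x, z)).1) x
    simpa [zero_add] using h
  have hΦle : ∀ R, 0 ≤ R → ∀ x, Φ R x ≤ F x := by
    intro R hR x
    rw [hΦeq, intervalIntegral.integral_of_le (by linarith : x ≤ R + x)]
    exact setIntegral_mono_set (hint x).integrableOn
      (Eventually.of_forall fun z => hf0 _)
      (HasSubset.Subset.eventuallyLE Ioc_subset_Ioi_self)
  have hΦtend : ∀ x, Tendsto (fun R => Φ R x) atTop (nhds (F x)) := by
    intro x
    have h := intervalIntegral_tendsto_integral_Ioi x (hint x).integrableOn
      (tendsto_atTop_add_const_right atTop x tendsto_id)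
    exact Tendsto.congr (fun R => (hΦeq R x).symm) h
  -- frequently small tails
  have hfreq : ∀ ε > 0, ∃ᶠ R in atTop, (∫ x in (0 : ℝ)..t, (j (x, R + x)).1) < ε := by
    intro ε hε
    set Fl : ℝ → ℝ → ℝ≥0∞ := fun R x => ENNReal.ofReal ((j (x, R + x)).1) with hFl
    have hucont : Continuous (fun q : ℝ × ℝ => (j (q.2, q.1 + q.2)).1) :=
      hfcont.comp (continuous_snd.prodMk (continuous_fst.add continuous_snd))
    have hmeasFl : Measurable (Function.uncurry Fl) := hucont.measurable.ennreal_ofReal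
    set Hl : ℝ → ℝ≥0∞ := fun R => ∫⁻ x in Ioc (0 : ℝ) t, Fl R x with hHl
    have hHlmeas : Measurable Hl := hmeasFl.lintegral_prod_right
    have htot : (∫⁻ R in Ioi (0 : ℝ), Hl R) ≤ ENNReal.ofReal t := by
      have hswap : (∫⁻ R in Ioi (0 : ℝ), Hl R)
          = ∫⁻ x in Ioc (0 : ℝ) t, ∫⁻ R in Ioi (0 : ℝ), Fl R x :=
        lintegral_lintegral_swap hmeasFl.aemeasurable
      rw [hswap]
      have hinner : ∀ x, (∫⁻ R in Ioi (0 : ℝ), Fl R x) ≤ 1 := by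
        intro x
        have hmp : MeasurePreserving (fun R : ℝ => R + x) volume volume :=
          measurePreserving_add_right volume x
        have hpre : (fun R : ℝ => R + x) ⁻¹' (Ioi x) = Ioi (0 : ℝ) := by ext r; simp
        have hm : Measurable (fun z : ℝ => ENNReal.ofReal ((j (x, z)).1)) :=
          ((hfcont.comp (continuous_const.prodMk continuous_id))).measurable.ennreal_ofReal
        have h1 := hmp.setLIntegral_comp_preimage (s := Ioi x) measurableSet_Ioi hm
        rw [hpre] at h1
        calc (∫⁻ R in Ioi (0 : ℝ), Fl R x)
            = ∫⁻ z in Ioi x, ENNReal.ofReal ((j (x, z)).1) := h1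
          _ ≤ ∫⁻ z, ENNReal.ofReal ((j (x, z)).1) :=
              lintegral_mono' Measure.restrict_le_self le_rfl
          _ = ENNReal.ofReal (∫ z, (j (x, z)).1) :=
              (ofReal_integral_eq_lintegral_ofReal (hint x)
                (Eventually.of_forall fun z => hf0 _)).symm
          _ = 1 := by rw [hnorm x]; norm_num
      calc (∫⁻ x in Ioc (0 : ℝ) t, ∫⁻ R in Ioi (0 : ℝ), Fl R x)
          ≤ ∫⁻ _x in Ioc (0 : ℝ) t, 1 := lintegral_mono fun x => hinner x
        _ = ENNReal.ofReal t := by simp [Real.volume_Ioc]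
    have hHR : ∀ R, ENNReal.ofReal (∫ x in (0 : ℝ)..t, (j (x, R + x)).1) = Hl R := by
      intro R
      rw [intervalIntegral.integral_of_le ht]
      exact ofReal_integral_eq_lintegral_ofReal
        ((hfcont.comp (hline1 R)).integrableOn_Ioc)
        (Eventually.of_forall fun x => hf0 _)
    by_contra hcon
    rw [not_frequently] at hcon
    obtain ⟨M, hM⟩ := eventually_atTop.1 hcon
    have hlow : ∀ R ∈ Ioi (max M 0), ENNReal.ofReal ε ≤ Hl R := by
      intro R hR
      rw [← hHR R]
      exact ENNReal.ofReal_le_ofReal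
        (not_lt.1 (hM R (le_trans (le_max_left _ _) (le_of_lt hR))))
    have hinf : (⊤ : ℝ≥0∞) ≤ ∫⁻ R in Ioi (0 : ℝ), Hl R := by
      calc (⊤ : ℝ≥0∞) = ENNReal.ofReal ε * volume (Ioi (max M 0)) := by
            rw [Real.volume_Ioi, ENNReal.mul_top (ENNReal.ofReal_pos.2 hε).ne']
        _ = ∫⁻ _ in Ioi (max M 0), ENNReal.ofReal ε := (setLIntegral_const _ _).symm
        _ ≤ ∫⁻ R in Ioi (max M 0), Hl R := setLIntegral_mono hHlmeas hlow
        _ ≤ ∫⁻ R in Ioi (0 : ℝ), Hl R :=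
            lintegral_mono_set (Ioi_subset_Ioi (le_max_right _ _))
    have : (⊤ : ℝ≥0∞) ≤ ENNReal.ofReal t := le_trans hinf htot
    simp at this
  -- key monotonicity
  have key : F t ≤ F 0 := by
    refine le_of_forall_pos_le_add fun ε hε => ?_
    have h1 : ∀ᶠ R in atTop, F t - ε / 3 < Φ R t :=
      (hΦtend t).eventually (eventually_gt_nhds (by linarith))
    have h2 : ∀ᶠ R : ℝ in atTop, (0 : ℝ) ≤ R := eventually_ge_atTop 0
    obtain ⟨R, hR1, hR2, hR3⟩ :=
      ((hfreq (ε / 3) (by linarith)).and_eventually (h1.and h2)).exists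
    have h4 := hEle R
    have h5 := hΦle R hR3 0
    linarith
  -- initial condition
  have hF0 : F 0 = 1 - P := by
    have h := intervalIntegral.integral_Iic_add_Ioi (b := (0 : ℝ)) (μ := volume)
      (hint 0).integrableOn (hint 0).integrableOn
    rw [hnorm 0] at h
    have h2 : (∫ z in Iic (0 : ℝ), (j (0, z)).1) = P := by
      rw [integral_Iic_eq_integral_Iio]; exact hinit
    simp only [hF]
    linarith
  have hfin : (∫ z in Ioi L, (j (t, z)).1) ≤ F t :=
    setIntegral_mono_set (hint t).integrableOn
      (Eventually.of_forall fun z => hf0 _)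
      (HasSubset.Subset.eventuallyLE (Ioi_subset_Ioi htL.le))
  linarith
end

section
/- Let j : ℝ² → ℝ² be a continuously differentiable conserved current (∂_t j⁰ + ∂_z j^z = 0) with j⁰ ≥ |j^z|, integrable and decaying at spatial infinity. Then for any a ∈ ℝ, the function t ↦ ∫_{a+t}^{∞} j⁰(t,z) dz is non-increasing in t. -/
open MeasureTheory Filter

open Set in

lemma aux_light_ray_deriv (f g : ℝ × ℝ → ℝ) (hf : ContDiff ℝ 1 f) (hg : ContDiff ℝ 1 g)
    (hcons : ∀ p : ℝ × ℝ, fderiv ℝ f p (1, 0) + fderiv ℝ g p (0, 1) = 0)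
    (a R t₀ : ℝ) :
    HasDerivAt (fun t => (R - a - 2*t) * ∫ s in (0:ℝ)..1, f (t, a + t + s * (R - a - 2*t)))
      (-(f (t₀, a + t₀) - g (t₀, a + t₀)) - (f (t₀, R - t₀) + g (t₀, R - t₀))) t₀ := by
  have hfd : Differentiable ℝ f := hf.differentiable one_ne_zero
  have hgd : Differentiable ℝ g := hg.differentiable one_ne_zero
  have hfc : Continuous f := hf.continuous
  have hgc : Continuous g := hg.continuous
  have hcf : Continuous (fderiv ℝ f) := hf.continuous_fderiv one_ne_zero
  have hcg : Continuous (fderiv ℝ g) := hg.continuous_fderiv one_ne_zero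
  have hcurve : Continuous (fun q : ℝ × ℝ => (q.1, a + q.1 + q.2 * (R - a - 2*q.1))) := by
    fun_prop
  have hpcont : Continuous (fun s : ℝ => ((t₀ : ℝ), a + t₀ + s * (R - a - 2*t₀))) := by
    fun_prop
  -- pointwise differentiability in the parameter
  have h_diff_all : ∀ (x s : ℝ), HasDerivAt (fun x => f (x, a + x + s * (R - a - 2*x)))
      (fderiv ℝ f (x, a + x + s * (R - a - 2*x)) (1, 1 - 2*s)) x := by
    intro x s
    have h2 : HasDerivAt (fun x : ℝ => a + x + s * (R - a - 2*x)) (1 - 2*s) x := by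
      have hx : HasDerivAt (fun x : ℝ => a + x) 1 x := (hasDerivAt_id x).const_add a
      have hy : HasDerivAt (fun x : ℝ => s * (R - a - 2*x)) (s * -(2*1)) x :=
        ((((hasDerivAt_id x).const_mul (2:ℝ))).const_sub (R - a)).const_mul s
      have h := hx.add hy
      rw [show (1:ℝ) - 2*s = 1 + s * -(2*1) by ring]
      exact h
    have hline : HasDerivAt (fun x : ℝ => (x, a + x + s * (R - a - 2*x)))
        ((1 : ℝ), 1 - 2*s) x := (hasDerivAt_id x).prodMk h2
    exact (hfd _).hasFDerivAt.comp_hasDerivAt x hline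
  -- parametric differentiation under the integral sign
  have key : HasDerivAt (fun x => ∫ s in (0:ℝ)..1, f (x, a + x + s * (R - a - 2*x)))
      (∫ s in (0:ℝ)..1, fderiv ℝ f (t₀, a + t₀ + s * (R - a - 2*t₀)) (1, 1 - 2*s)) t₀ := by
    have hF'cont : Continuous (fun q : ℝ × ℝ =>
        fderiv ℝ f (q.1, a + q.1 + q.2 * (R - a - 2*q.1)) ((1:ℝ), 1 - 2*q.2)) :=
      (hcf.comp hcurve).clm_apply (by fun_prop)
    obtain ⟨C, hC⟩ := (IsCompact.exists_bound_of_continuousOn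
      ((isCompact_Icc (a := t₀ - 1) (b := t₀ + 1)).prod (isCompact_Icc (a := (0:ℝ)) (b := 1)))
      hF'cont.continuousOn)
    have main := intervalIntegral.hasDerivAt_integral_of_dominated_loc_of_deriv_le
      (𝕜 := ℝ) (μ := volume) (a := 0) (b := 1) (s := Metric.ball t₀ 1)
      (F := fun x s => f (x, a + x + s * (R - a - 2*x)))
      (F' := fun x s => fderiv ℝ f (x, a + x + s * (R - a - 2*x)) (1, 1 - 2*s))
      (x₀ := t₀) (bound := fun _ => C) (Metric.ball_mem_nhds t₀ one_pos)
      (Eventually.of_forall fun x =>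
        ((hfc.comp (hcurve.comp (Continuous.prodMk_right x))).aestronglyMeasurable))
      ((hfc.comp (hcurve.comp (Continuous.prodMk_right t₀))).intervalIntegrable 0 1)
      ((hF'cont.comp (Continuous.prodMk_right t₀)).aestronglyMeasurable)
      (Eventually.of_forall fun s hs x hx => by
        refine hC (x, s) ⟨?_, ?_⟩
        · have h0 := Metric.mem_ball.mp hx
          rw [Real.dist_eq] at h0
          have hd := abs_le.mp h0.le
          exact ⟨by linarith [hd.1], by linarith [hd.2]⟩
        · rw [Set.uIoc_of_le (by norm_num : (0:ℝ) ≤ 1)] at hs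
          exact ⟨hs.1.le, hs.2⟩)
      ((continuous_const).intervalIntegrable 0 1)
      (Eventually.of_forall fun s _ x _ => h_diff_all x s)
    exact main.2
  -- derivative of the prefactor
  have hLder : HasDerivAt (fun t : ℝ => R - a - 2*t) (-2) t₀ := by
    have h := ((hasDerivAt_id t₀).const_mul (2:ℝ)).const_sub (R - a)
    rw [show (-2:ℝ) = -(2*1) by ring]
    exact h
  have hprod := hLder.mul key
  -- the curve s ↦ p s and its derivative
  have hps : ∀ s : ℝ, HasDerivAt (fun s : ℝ => ((t₀ : ℝ), a + t₀ + s * (R - a - 2*t₀)))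
      ((0:ℝ), R - a - 2*t₀) s := by
    intro s
    have h2 : HasDerivAt (fun s : ℝ => a + t₀ + s * (R - a - 2*t₀)) (1 * (R - a - 2*t₀)) s :=
      ((hasDerivAt_id s).mul_const _).const_add (a + t₀)
    have h := (hasDerivAt_const s t₀).prodMk h2
    simpa using h
  have hfp : ∀ s : ℝ, HasDerivAt (fun s => f ((t₀ : ℝ), a + t₀ + s * (R - a - 2*t₀)))
      (fderiv ℝ f (t₀, a + t₀ + s * (R - a - 2*t₀)) ((0:ℝ), R - a - 2*t₀)) s :=
    fun s => (hfd _).hasFDerivAt.comp_hasDerivAt s (hps s)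
  have hgp : ∀ s : ℝ, HasDerivAt (fun s => g ((t₀ : ℝ), a + t₀ + s * (R - a - 2*t₀)))
      (fderiv ℝ g (t₀, a + t₀ + s * (R - a - 2*t₀)) ((0:ℝ), R - a - 2*t₀)) s :=
    fun s => (hgd _).hasFDerivAt.comp_hasDerivAt s (hps s)
  -- continuity of integrands
  have hcγ : Continuous (fun s : ℝ =>
      fderiv ℝ g (t₀, a + t₀ + s * (R - a - 2*t₀)) ((0:ℝ), R - a - 2*t₀)) :=
    (hcg.comp hpcont).clm_apply continuous_const
  have hcδ : Continuous (fun s : ℝ =>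
      fderiv ℝ f (t₀, a + t₀ + s * (R - a - 2*t₀)) ((0:ℝ), R - a - 2*t₀)) :=
    (hcf.comp hpcont).clm_apply continuous_const
  have hcβ : Continuous (fun s : ℝ =>
      (1 - 2*s) * fderiv ℝ f (t₀, a + t₀ + s * (R - a - 2*t₀)) ((0:ℝ), R - a - 2*t₀)) :=
    (by fun_prop : Continuous fun s : ℝ => (1 - 2*s)).mul hcδ
  have hcfp : Continuous (fun s : ℝ => f ((t₀ : ℝ), a + t₀ + s * (R - a - 2*t₀))) :=
    hfc.comp hpcont
  -- endpoint simplifications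
  have hq1 : ((t₀ : ℝ), a + t₀ + 1 * (R - a - 2*t₀)) = ((t₀ : ℝ), R - t₀) := by
    rw [Prod.mk.injEq]; exact ⟨rfl, by ring⟩
  have hq0 : ((t₀ : ℝ), a + t₀ + 0 * (R - a - 2*t₀)) = ((t₀ : ℝ), a + t₀) := by
    rw [Prod.mk.injEq]; exact ⟨rfl, by ring⟩
  -- FTC for g along the segment
  have e2 : (∫ s in (0:ℝ)..1,
      fderiv ℝ g (t₀, a + t₀ + s * (R - a - 2*t₀)) ((0:ℝ), R - a - 2*t₀))
      = g (t₀, R - t₀) - g (t₀, a + t₀) := by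
    have h := intervalIntegral.integral_eq_sub_of_hasDerivAt (fun s _ => hgp s)
      (hcγ.intervalIntegrable 0 1)
    beta_reduce at h
    rw [hq1, hq0] at h
    exact h
  -- FTC for (1-2s) f along the segment
  have hu : ∀ s : ℝ, HasDerivAt (fun s : ℝ => (1 - 2*s) * f ((t₀:ℝ), a + t₀ + s * (R - a - 2*t₀)))
      (-(2*1) * f ((t₀:ℝ), a + t₀ + s * (R - a - 2*t₀))
        + (1 - 2*s) * fderiv ℝ f (t₀, a + t₀ + s * (R - a - 2*t₀)) ((0:ℝ), R - a - 2*t₀)) s := by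
    intro s
    have h1 : HasDerivAt (fun s : ℝ => 1 - 2*s) (-(2*1)) s :=
      ((hasDerivAt_id s).const_mul (2:ℝ)).const_sub 1
    exact h1.mul (hfp s)
  have e3' : (∫ s in (0:ℝ)..1,
      (-(2*1) * f ((t₀:ℝ), a + t₀ + s * (R - a - 2*t₀))
        + (1 - 2*s) * fderiv ℝ f (t₀, a + t₀ + s * (R - a - 2*t₀)) ((0:ℝ), R - a - 2*t₀)))
      = (1 - 2*1) * f ((t₀:ℝ), R - t₀) - (1 - 2*0) * f ((t₀:ℝ), a + t₀) := by
    have h := intervalIntegral.integral_eq_sub_of_hasDerivAt (fun s _ => hu s)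
      (((continuous_const.mul hcfp).add hcβ).intervalIntegrable 0 1)
    beta_reduce at h
    rw [hq1, hq0] at h
    exact h
  have e3 : -(2*1) * (∫ s in (0:ℝ)..1, f ((t₀:ℝ), a + t₀ + s * (R - a - 2*t₀)))
      + (∫ s in (0:ℝ)..1,
        (1 - 2*s) * fderiv ℝ f (t₀, a + t₀ + s * (R - a - 2*t₀)) ((0:ℝ), R - a - 2*t₀))
      = (1 - 2*1) * f ((t₀:ℝ), R - t₀) - (1 - 2*0) * f ((t₀:ℝ), a + t₀) := by
    rw [← intervalIntegral.integral_const_mul]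
    rw [← intervalIntegral.integral_add (f := fun s => -(2*1) * f ((t₀:ℝ), a + t₀ + s * (R - a - 2*t₀)))
      ((continuous_const.mul hcfp).intervalIntegrable 0 1)
      (hcβ.intervalIntegrable 0 1)]
    exact e3'
  -- splitting identity
  have hsplit : ∀ s : ℝ, (R - a - 2*t₀)
        * fderiv ℝ f (t₀, a + t₀ + s * (R - a - 2*t₀)) ((1:ℝ), 1 - 2*s)
      = -(fderiv ℝ g (t₀, a + t₀ + s * (R - a - 2*t₀)) ((0:ℝ), R - a - 2*t₀))
        + (1 - 2*s) * fderiv ℝ f (t₀, a + t₀ + s * (R - a - 2*t₀)) ((0:ℝ), R - a - 2*t₀) := by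
    intro s
    have hv1 : ((1:ℝ), 1 - 2*s) = ((1:ℝ), (0:ℝ)) + (1 - 2*s) • ((0:ℝ), (1:ℝ)) := by
      simp [Prod.ext_iff]
    have hv2 : ((0:ℝ), R - a - 2*t₀) = (R - a - 2*t₀) • ((0:ℝ), (1:ℝ)) := by
      simp [Prod.ext_iff]
    rw [hv1, hv2, map_add, _root_.map_smul, _root_.map_smul, _root_.map_smul, smul_eq_mul, smul_eq_mul, smul_eq_mul]
    have h := hcons (t₀, a + t₀ + s * (R - a - 2*t₀))
    linear_combination (R - a - 2*t₀) * h
  -- combine : value of L₀ * J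
  have e1 : (R - a - 2*t₀) * (∫ s in (0:ℝ)..1,
        fderiv ℝ f (t₀, a + t₀ + s * (R - a - 2*t₀)) ((1:ℝ), 1 - 2*s))
      = -(∫ s in (0:ℝ)..1,
          fderiv ℝ g (t₀, a + t₀ + s * (R - a - 2*t₀)) ((0:ℝ), R - a - 2*t₀))
        + (∫ s in (0:ℝ)..1,
          (1 - 2*s) * fderiv ℝ f (t₀, a + t₀ + s * (R - a - 2*t₀)) ((0:ℝ), R - a - 2*t₀)) := by
    rw [← intervalIntegral.integral_const_mul, ← intervalIntegral.integral_neg,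
      ← intervalIntegral.integral_add
        (f := fun s => -(fderiv ℝ g (t₀, a + t₀ + s * (R - a - 2*t₀)) ((0:ℝ), R - a - 2*t₀)))
        (hcγ.neg.intervalIntegrable 0 1)
        (hcβ.intervalIntegrable 0 1)]
    exact intervalIntegral.integral_congr (fun s _ => hsplit s)
  -- finish
  refine hprod.congr_deriv ?_
  linarith [e1, e2, e3]


/-- Photons overtake electrons: for a conserved causal current, the probability to
the right of any rightward-moving light ray z = a + t is non-increasing in t.
Coordinates: p = (t, z); (j p).1 = j⁰, (j p).2 = j^z. -/
theorem probability_right_of_light_ray_antitone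
    (j : ℝ × ℝ → ℝ × ℝ) (hj : ContDiff ℝ 1 j)
    (hcons : ∀ p : ℝ × ℝ,
      fderiv ℝ (fun q => (j q).1) p (1, 0) + fderiv ℝ (fun q => (j q).2) p (0, 1) = 0)
    (hcausal : ∀ p : ℝ × ℝ, |(j p).2| ≤ (j p).1)
    (hint : ∀ t : ℝ, Integrable (fun z => (j (t, z)).1))
    (hdecay : ∀ t : ℝ, Tendsto (fun z => j (t, z)) atTop (nhds 0) ∧
      Tendsto (fun z => j (t, z)) atBot (nhds 0)) :
    ∀ a : ℝ, Antitone (fun t : ℝ => ∫ z in Set.Ioi (a + t), (j (t, z)).1) := by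
  intro a t₁ t₂ h12
  have hf : ContDiff ℝ 1 (fun q : ℝ × ℝ => (j q).1) := contDiff_fst.comp hj
  have hg : ContDiff ℝ 1 (fun q : ℝ × ℝ => (j q).2) := contDiff_snd.comp hj
  -- the truncated charge between the two light rays, in parametrized form, is antitone
  have hanti : ∀ R : ℝ, Antitone (fun t : ℝ =>
      (R - a - 2*t) * ∫ s in (0:ℝ)..1, (j (t, a + t + s * (R - a - 2*t))).1) := by
    intro R
    have hd : ∀ t₀ : ℝ, HasDerivAt (fun t : ℝ =>
        (R - a - 2*t) * ∫ s in (0:ℝ)..1, (j (t, a + t + s * (R - a - 2*t))).1)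
        (-((j (t₀, a + t₀)).1 - (j (t₀, a + t₀)).2)
          - ((j (t₀, R - t₀)).1 + (j (t₀, R - t₀)).2)) t₀ :=
      fun t₀ => aux_light_ray_deriv _ _ hf hg hcons a R t₀
    apply antitone_of_deriv_nonpos
    · exact fun t => (hd t).differentiableAt
    · intro t
      rw [(hd t).deriv]
      have h1 := abs_le.mp (hcausal (t, a + t))
      have h2 := abs_le.mp (hcausal (t, R - t))
      linarith [h1.1, h1.2, h2.1, h2.2]
  -- identification with the set integral over (a+t, R-t]
  have hEq : ∀ (R t : ℝ), 0 ≤ R - a - 2*t →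
      (R - a - 2*t) * (∫ s in (0:ℝ)..1, (j (t, a + t + s * (R - a - 2*t))).1)
        = ∫ z in Set.Ioc (a + t) (R - t), (j (t, z)).1 := by
    intro R t hL
    have h1 : (fun s : ℝ => (j (t, a + t + s * (R - a - 2*t))).1)
        = fun s : ℝ => (fun z => (j (t, z)).1) ((R - a - 2*t) * s + (a + t)) := by
      funext s
      show (j (t, a + t + s * (R - a - 2*t))).1 = (j (t, (R - a - 2*t) * s + (a + t))).1
      congr 2
      ring
    have h2 := intervalIntegral.smul_integral_comp_mul_add (a := 0) (b := 1)
      (f := fun z => (j (t, z)).1) (R - a - 2*t) (a + t)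
    rw [h1, ← smul_eq_mul]
    beta_reduce
    rw [h2,
      show (R - a - 2*t) * 0 + (a + t) = a + t by ring,
      show (R - a - 2*t) * 1 + (a + t) = R - t by ring,
      intervalIntegral.integral_of_le (by linarith : a + t ≤ R - t)]
  -- the truncated integrals converge to the full one
  have hlim : ∀ t : ℝ, Tendsto (fun n : ℕ => ∫ z in Set.Ioc (a + t) ((n:ℝ) - t), (j (t, z)).1)
      atTop (nhds (∫ z in Set.Ioi (a + t), (j (t, z)).1)) := by
    intro t
    have hU : ⋃ n : ℕ, Set.Ioc (a + t) ((n:ℝ) - t) = Set.Ioi (a + t) := by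
      ext z
      simp only [Set.mem_iUnion, Set.mem_Ioc, Set.mem_Ioi]
      constructor
      · rintro ⟨n, h1, _⟩; exact h1
      · intro hz
        obtain ⟨n, hn⟩ := exists_nat_ge (z + t)
        exact ⟨n, hz, by linarith⟩
    have h := MeasureTheory.tendsto_setIntegral_of_monotone
      (s := fun n : ℕ => Set.Ioc (a + t) ((n:ℝ) - t)) (f := fun z => (j (t, z)).1)
      (fun _ => measurableSet_Ioc)
      (fun m n hmn => Set.Ioc_subset_Ioc_right (sub_le_sub_right (Nat.cast_le.mpr hmn) t))
      (by rw [hU]; exact (hint t).integrableOn)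
    rw [hU] at h
    exact h
  show (∫ z in Set.Ioi (a + t₂), (j (t₂, z)).1) ≤ ∫ z in Set.Ioi (a + t₁), (j (t₁, z)).1
  refine le_of_tendsto_of_tendsto (hlim t₂) (hlim t₁) ?_
  obtain ⟨N, hN⟩ := exists_nat_ge (a + 2 * t₂)
  filter_upwards [eventually_ge_atTop N] with n hn
  have hcast : (N:ℝ) ≤ (n:ℝ) := Nat.cast_le.mpr hn
  have hL2 : 0 ≤ (n:ℝ) - a - 2*t₂ := by linarith
  have hL1 : 0 ≤ (n:ℝ) - a - 2*t₁ := by linarith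
  calc (∫ z in Set.Ioc (a + t₂) ((n:ℝ) - t₂), (j (t₂, z)).1)
      = ((n:ℝ) - a - 2*t₂) * ∫ s in (0:ℝ)..1, (j (t₂, a + t₂ + s * ((n:ℝ) - a - 2*t₂))).1 :=
        (hEq (n:ℝ) t₂ hL2).symm
    _ ≤ ((n:ℝ) - a - 2*t₁) * ∫ s in (0:ℝ)..1, (j (t₁, a + t₁ + s * ((n:ℝ) - a - 2*t₁))).1 :=
        hanti (n:ℝ) h12
    _ = ∫ z in Set.Ioc (a + t₁) ((n:ℝ) - t₁), (j (t₁, z)).1 := hEq (n:ℝ) t₁ hL1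
end
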